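/- Let κ = χ ⋈_{x*,y*} ξ with x* extreme in χ and y* extreme in ξ. If T is a set of pairwise noncrossing segments of κ, then its projection π_{Y→x*}(T), obtained by replacing every endpoint in Y by x* and deleting the degenerate edge {x*,x*}, is a set of pairwise noncrossing segments of χ. -/

import Mathlib

/-- A sign function on the (finite) ground set `S`: defined on triples of
pairwise distinct elements of `S`, with values in `{-1, +1}`, alternating
under permutations of the arguments. -/
def SignFnOn {T : Type*} (χ : T → T → T → ℤ) (S : Finset T) : Prop :=
  ∀ x ∈ S, ∀ y ∈ S, ∀ z ∈ S, x ≠ y → y ≠ z → x ≠ z →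
    (χ x y z = 1 ∨ χ x y z = -1) ∧ χ x y z = χ y z x ∧ χ x y z = -χ y x z

/-- The interiority axiom on the ground set `S`. -/
def InteriorityOn {T : Type*} (χ : T → T → T → ℤ) (S : Finset T) : Prop :=
  ∀ t ∈ S, ∀ x ∈ S, ∀ y ∈ S, ∀ z ∈ S,
    t ≠ x → t ≠ y → t ≠ z → x ≠ y → x ≠ z → y ≠ z →
    χ t y z = 1 → χ x t z = 1 → χ x y t = 1 → χ x y z = 1

/-- The transitivity axiom on the ground set `S`. -/
def TransitivityOn {T : Type*} (χ : T → T → T → ℤ) (S : Finset T) : Prop :=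
  ∀ s ∈ S, ∀ t ∈ S, ∀ x ∈ S, ∀ y ∈ S, ∀ z ∈ S,
    s ≠ t → s ≠ x → s ≠ y → s ≠ z → t ≠ x → t ≠ y → t ≠ z →
    x ≠ y → x ≠ z → y ≠ z →
    χ t s x = 1 → χ t s y = 1 → χ t s z = 1 → χ x y t = 1 → χ y z t = 1 →
    χ x z t = 1

/-- A chirotope on the ground set `S`. -/
def ChirotopeOn {T : Type*} (χ : T → T → T → ℤ) (S : Finset T) : Prop :=
  SignFnOn χ S ∧ InteriorityOn χ S ∧ TransitivityOn χ S

/-- `x` is extreme in the chirotope `χ` on ground set `S`: `x ∈ S` and there is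
`y ∈ S \ {x}` such that `χ x y z` takes the same value for all
`z ∈ S \ {x, y}`. -/
def ExtremeInOn {T : Type*} (χ : T → T → T → ℤ) (S : Finset T) (x : T) : Prop :=
  x ∈ S ∧ ∃ y ∈ S, y ≠ x ∧ ∃ c : ℤ, ∀ z ∈ S, z ≠ x → z ≠ y → χ x y z = c

/-- Replace every element outside `S` by the proxy `p`. -/
def projTo {T : Type*} [DecidableEq T] (S : Finset T) (p : T) (u : T) : T :=
  if u ∈ S then u else p

/-- The bowtie `χ ⋈_{xs, ys} ξ` of a sign function `χ` on `X ∪ {xs}` and a sign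
function `ξ` on `Y ∪ {ys}`: on a triple of elements of `X ∪ Y`, if the majority
of the elements lies in `X` use `χ`, replacing the (possible) element of `Y` by
the proxy `xs`; otherwise use `ξ`, replacing the (possible) element of `X` by
the proxy `ys`.  This agrees with the definition on the four distinguished
kinds of triples, extended by the symmetry condition. -/
def bowtie {T : Type*} [DecidableEq T] (χ : T → T → T → ℤ) (X : Finset T)
    (xs : T) (ξ : T → T → T → ℤ) (Y : Finset T) (ys : T) : T → T → T → ℤ :=
  fun u v w =>
    if 2 ≤ ((if u ∈ X then 1 else 0) + (if v ∈ X then 1 else 0) +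
        (if w ∈ X then 1 else 0) : ℕ) then
      χ (projTo X xs u) (projTo X xs v) (projTo X xs w)
    else
      ξ (projTo Y ys u) (projTo Y ys v) (projTo Y ys w)

/-- The segments `pq` and `rs` (with pairwise distinct endpoints) cross in the
chirotope `κ`. -/
def Crosses {T : Type*} (κ : T → T → T → ℤ) (p q r s : T) : Prop :=
  κ p q r = -(κ p q s) ∧ κ r s p = -(κ r s q)

/-- A set of segments (unordered pairs) is pairwise noncrossing in `κ`. -/
def PairwiseNoncrossing {T : Type*} (κ : T → T → T → ℤ)
    (E : Set (Sym2 T)) : Prop :=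
  ∀ p q r s : T, Sym2.mk p q ∈ E → Sym2.mk r s ∈ E →
    p ≠ q → r ≠ s → p ≠ r → p ≠ s → q ≠ r → q ≠ s → ¬ Crosses κ p q r s

/-- `E` is a set of segments with endpoints in `S`. -/
def SegmentsOn {T : Type*} (S : Finset T) (E : Set (Sym2 T)) : Prop :=
  ∀ e ∈ E, ∃ p ∈ S, ∃ q ∈ S, p ≠ q ∧ e = Sym2.mk p q

/-- If `E` is a set of pairwise noncrossing segments of the
bowtie `κ = χ ⋈_{x*,y*} ξ`, then its projection `π_{Y→x*}(E)` — replace every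
endpoint in `Y` by `x*` and delete the degenerate edge `{x*, x*}` — is a set
of pairwise noncrossing segments of `χ`. -/
theorem projection_noncrossing
    {T : Type*} [DecidableEq T] (χ ξ : T → T → T → ℤ)
    (X Y : Finset T) (xs ys : T)
    (hdisj : Disjoint X Y) (hxs : xs ∉ X ∪ Y) (hys : ys ∉ X ∪ Y) (hxy : xs ≠ ys)
    (hχ : ChirotopeOn χ (insert xs X)) (hξ : ChirotopeOn ξ (insert ys Y))
    (hx : ExtremeInOn χ (insert xs X) xs) (hy : ExtremeInOn ξ (insert ys Y) ys)
    (E : Set (Sym2 T)) (hE : SegmentsOn (X ∪ Y) E)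
    (hnc : PairwiseNoncrossing (bowtie χ X xs ξ Y ys) E) :
    SegmentsOn (insert xs X)
        {e | e ∈ Sym2.map (projTo X xs) '' E ∧ ¬ e.IsDiag} ∧
      PairwiseNoncrossing χ
        {e | e ∈ Sym2.map (projTo X xs) '' E ∧ ¬ e.IsDiag} := by

  classical
  have hxsX : xs ∉ X := fun h => hxs (Finset.mem_union_left _ h)
  have hπX : ∀ u ∈ X, projTo X xs u = u := by intro u hu; simp [projTo, hu]
  have hπY : ∀ u ∈ Y, projTo X xs u = xs := by
    intro u hu
    have : u ∉ X := fun h => (Finset.disjoint_left.mp hdisj h) hu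
    simp [projTo, this]
  have hπmem : ∀ u ∈ X ∪ Y, projTo X xs u ∈ insert xs X := by
    intro u hu
    rcases Finset.mem_union.mp hu with h | h
    · rw [hπX u h]; exact Finset.mem_insert_of_mem h
    · rw [hπY u h]; exact Finset.mem_insert_self _ _
  have hone : ∀ a b : T, a ∈ X ∪ Y → b ∈ X ∪ Y →
      projTo X xs a ≠ projTo X xs b → a ∈ X ∨ b ∈ X := by
    intro a b ha hb hne
    by_contra h
    push_neg at h
    have ha' : a ∈ Y := by
      rcases Finset.mem_union.mp ha with h' | h'
      · exact absurd h' h.1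
      · exact h'
    have hb' : b ∈ Y := by
      rcases Finset.mem_union.mp hb with h' | h'
      · exact absurd h' h.2
      · exact h'
    exact hne (by rw [hπY a ha', hπY b hb'])
  have hbow : ∀ u v w : T,
      (u ∈ X ∧ v ∈ X) ∨ (u ∈ X ∧ w ∈ X) ∨ (v ∈ X ∧ w ∈ X) →
      bowtie χ X xs ξ Y ys u v w
        = χ (projTo X xs u) (projTo X xs v) (projTo X xs w) := by
    intro u v w h
    have hcond : 2 ≤ ((if u ∈ X then 1 else 0) + (if v ∈ X then 1 else 0) +
        (if w ∈ X then 1 else 0) : ℕ) := by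
      split_ifs <;> first | omega | tauto
    simp only [bowtie, if_pos hcond]
  have extract : ∀ a b : T,
      Sym2.mk a b ∈ {e | e ∈ Sym2.map (projTo X xs) '' E ∧ ¬ e.IsDiag} →
      ∃ p0 q0 : T, p0 ∈ X ∪ Y ∧ q0 ∈ X ∪ Y ∧ p0 ≠ q0 ∧
        Sym2.mk p0 q0 ∈ E ∧ projTo X xs p0 = a ∧ projTo X xs q0 = b := by
    rintro a b ⟨⟨e0, he0, heq⟩, hdiag⟩
    obtain ⟨p0, hp0, q0, hq0, hne0, rfl⟩ := hE e0 he0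
    rw [Sym2.map_pair_eq, Sym2.eq_iff] at heq
    rcases heq with ⟨h1, h2⟩ | ⟨h1, h2⟩
    · exact ⟨p0, q0, hp0, hq0, hne0, he0, h1, h2⟩
    · exact ⟨q0, p0, hq0, hp0, hne0.symm, by rwa [Sym2.eq_swap], h2, h1⟩
  constructor
  · rintro e ⟨⟨e0, he0, rfl⟩, hdiag⟩
    obtain ⟨p, hp, q, hq, hne, rfl⟩ := hE e0 he0
    rw [Sym2.map_pair_eq] at hdiag ⊢
    refine ⟨projTo X xs p, hπmem p hp, projTo X xs q, hπmem q hq, ?_, rfl⟩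
    simpa using hdiag
  · intro p q r s hpq hrs hpq' hrs' hpr hps hqr hqs hcr
    obtain ⟨p0, q0, hp0, hq0, hne1, he1, hπp, hπq⟩ := extract p q hpq
    obtain ⟨r0, s0, hr0, hs0, hne2, he2, hπr, hπs⟩ := extract r s hrs
    have dpq : p0 ∈ X ∨ q0 ∈ X := hone p0 q0 hp0 hq0 (by rw [hπp, hπq]; exact hpq')
    have dpr : p0 ∈ X ∨ r0 ∈ X := hone p0 r0 hp0 hr0 (by rw [hπp, hπr]; exact hpr)
    have dps : p0 ∈ X ∨ s0 ∈ X := hone p0 s0 hp0 hs0 (by rw [hπp, hπs]; exact hps)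
    have dqr : q0 ∈ X ∨ r0 ∈ X := hone q0 r0 hq0 hr0 (by rw [hπq, hπr]; exact hqr)
    have dqs : q0 ∈ X ∨ s0 ∈ X := hone q0 s0 hq0 hs0 (by rw [hπq, hπs]; exact hqs)
    have drs : r0 ∈ X ∨ s0 ∈ X := hone r0 s0 hr0 hs0 (by rw [hπr, hπs]; exact hrs')
    have hne3 : p0 ≠ r0 := fun h => hpr (by rw [← hπp, ← hπr, h])
    have hne4 : p0 ≠ s0 := fun h => hps (by rw [← hπp, ← hπs, h])
    have hne5 : q0 ≠ r0 := fun h => hqr (by rw [← hπq, ← hπr, h])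
    have hne6 : q0 ≠ s0 := fun h => hqs (by rw [← hπq, ← hπs, h])
    have tri : ∀ {A B C : Prop}, (A ∨ B) → (A ∨ C) → (B ∨ C) →
        (A ∧ B) ∨ (A ∧ C) ∨ (B ∧ C) := fun h1 h2 h3 =>
      h1.elim (fun a => h3.elim (fun b => Or.inl ⟨a, b⟩)
          (fun c => Or.inr (Or.inl ⟨a, c⟩)))
        (fun b => h2.elim (fun a => Or.inl ⟨a, b⟩)
          (fun c => Or.inr (Or.inr ⟨b, c⟩)))
    refine hnc p0 q0 r0 s0 he1 he2 hne1 hne2 hne3 hne4 hne5 hne6 ?_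
    refine ⟨?_, ?_⟩
    · rw [hbow p0 q0 r0 (tri dpq dpr dqr), hbow p0 q0 s0 (tri dpq dps dqs),
        hπp, hπq, hπr, hπs]
      exact hcr.1
    · rw [hbow r0 s0 p0 (tri drs (dpr.symm) (dps.symm)),
        hbow r0 s0 q0 (tri drs (dqr.symm) (dqs.symm)), hπp, hπq, hπr, hπs]
      exact hcr.2
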